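/- (Tightness of Chernoff bound, lower-tail version.) Let 0 < p, δ ≤ 1/2 and n ≥ 3/(δ²p). Let X_1,…,X_n be i.i.d. Bernoulli(p). Then Pr[Σ_i X_i ≤ (1−δ)pn] ≥ exp(−9δ²pn) and Pr[Σ_i X_i ≥ (1+δ)pn] ≥ exp(−9δ²pn). -/

import Mathlib

set_option maxHeartbeats 1000000

open Real Finset MeasureTheory
open scoped Classical


lemma antitone_aux (f f' : ℝ → ℝ) (hd : ∀ y, HasDerivAt f (f' y) y)
    (hneg : ∀ y, 0 ≤ y → f' y ≤ 0) {x : ℝ} (hx : 0 ≤ x) : f x ≤ f 0 := by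
  rcases eq_or_lt_of_le hx with h|h
  · rw [← h]
  · have hanti : AntitoneOn f (Set.Icc 0 x) := by
      apply antitoneOn_of_deriv_nonpos (convex_Icc 0 x)
      · exact fun y _ => (hd y).continuousAt.continuousWithinAt
      · exact fun y _ => (hd y).differentiableAt.differentiableWithinAt
      · intro y hy
        rw [interior_Icc] at hy
        rw [(hd y).deriv]
        exact hneg y hy.1.le
    exact hanti ⟨le_rfl, hx⟩ ⟨hx, le_rfl⟩ hx

lemma log_taylor_ub {x : ℝ} (hx : 0 ≤ x) : Real.log (1+x) ≤ x - x^2/2 + x^3/3 := by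
  have h1 : 0 < 1 + x := by linarith
  rw [Real.log_le_iff_le_exp h1]
  set u := x - x^2/2 + x^3/3 with hu
  have key : (1+x) * Real.exp (-(x - x^2/2 + x^3/3)) ≤ 1 := by
    have := antitone_aux (fun y => (1+y) * Real.exp (-(y - y^2/2 + y^3/3)))
      (fun y => Real.exp (-(y - y^2/2 + y^3/3)) * (-y^3)) ?_ ?_ hx
    · simpa using this
    · intro y
      have hpoly : HasDerivAt (fun y : ℝ => -(y - y^2/2 + y^3/3)) (-(1 - y + y^2)) y := by
        have := (((hasDerivAt_id' y).fun_sub ((hasDerivAt_pow 2 y).div_const 2)).fun_add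
          ((hasDerivAt_pow 3 y).div_const 3)).fun_neg
        norm_num at this
        exact (this.congr_deriv (by ring)).congr_of_eventuallyEq
          (Filter.Eventually.of_forall fun z => by ring)
      have hlin : HasDerivAt (fun y : ℝ => 1 + y) 1 y := by
        simpa using (hasDerivAt_id y).const_add (1:ℝ)
      have := hlin.fun_mul hpoly.exp
      exact this.congr_deriv (by ring)
    · intro y hy
      have : 0 ≤ y^3 := pow_nonneg hy 3
      nlinarith [Real.exp_pos (-(y - y^2/2 + y^3/3))]
  rw [Real.exp_neg] at key
  calc 1+x = ((1+x) * (Real.exp u)⁻¹) * Real.exp u := by field_simp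
    _ ≤ 1 * Real.exp u := mul_le_mul_of_nonneg_right key (Real.exp_pos u).le
    _ = Real.exp u := one_mul _

lemma neg_log_taylor_lb {x : ℝ} (hx : 0 ≤ x) (hx1 : x < 1) : x + x^2/2 ≤ -Real.log (1-x) := by
  have h1 : 0 < 1 - x := by linarith
  rw [le_neg, Real.log_le_iff_le_exp h1]
  have key : (1-x) * Real.exp (x + x^2/2) ≤ 1 := by
    have := antitone_aux (fun y => (1-y) * Real.exp (y + y^2/2))
      (fun y => Real.exp (y + y^2/2) * (-y^2)) ?_ ?_ hx
    · simpa using this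
    · intro y
      have hpoly : HasDerivAt (fun y : ℝ => y + y^2/2) (1 + y) y := by
        have := (hasDerivAt_id' y).fun_add ((hasDerivAt_pow 2 y).div_const 2)
        norm_num at this
        convert this using 1
        all_goals (try funext z)
        all_goals ring
      have hlin : HasDerivAt (fun y : ℝ => 1 - y) (-1) y := by
        simpa using ((hasDerivAt_id y).const_sub (1:ℝ))
      have := hlin.fun_mul hpoly.exp
      exact this.congr_deriv (by ring)
    · intro y hy
      nlinarith [Real.exp_pos (y + y^2/2), sq_nonneg y]
  have hepos := Real.exp_pos (x + x^2/2)
  calc 1-x = ((1-x) * Real.exp (x + x^2/2)) * Real.exp (-(x + x^2/2)) := by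
        rw [Real.exp_neg]; field_simp
    _ ≤ 1 * Real.exp (-(x + x^2/2)) := mul_le_mul_of_nonneg_right key (Real.exp_pos _).le
    _ = Real.exp (-(x + x^2/2)) := one_mul _



noncomputable def wt (n : ℕ) (r : ℝ) (x : Fin n → Bool) : ℝ := ∏ i, (if x i then r else 1-r)

def cnt (n : ℕ) (x : Fin n → Bool) : ℝ := ∑ i, (if x i then (1:ℝ) else 0)

lemma wt_nonneg {n : ℕ} {r : ℝ} (hr0 : 0 ≤ r) (hr1 : r ≤ 1) (x : Fin n → Bool) :
    0 ≤ wt n r x := by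
  apply Finset.prod_nonneg
  intro i _
  by_cases h : x i <;> simp [h] <;> linarith

lemma sum_wt (n : ℕ) (r : ℝ) : ∑ x : Fin n → Bool, wt n r x = 1 := by
  unfold wt
  rw [← Fintype.prod_sum (fun (i : Fin n) (b : Bool) => if b then r else 1-r)]
  have : ∀ i : Fin n, (∑ b : Bool, if b then r else 1-r) = 1 := by
    intro i
    rw [Fintype.sum_bool]
    simp
  rw [Finset.prod_congr rfl (fun i _ => this i)]
  simp

lemma cross {n : ℕ} (r : ℝ) (i j : Fin n) :
    ∑ x : Fin n → Bool, wt n r x * ((if x i then (1:ℝ) else 0) - r)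
      * ((if x j then (1:ℝ) else 0) - r) = if i = j then r*(1-r) else 0 := by
  have hrw : ∀ x : Fin n → Bool,
      wt n r x * ((if x i then (1:ℝ) else 0) - r) * ((if x j then (1:ℝ) else 0) - r)
      = ∏ k, ((if x k then r else 1-r)
          * (if i = k then ((if x k then (1:ℝ) else 0) - r) else 1)
          * (if j = k then ((if x k then (1:ℝ) else 0) - r) else 1)) := by
    intro x
    rw [Finset.prod_mul_distrib, Finset.prod_mul_distrib]
    rw [Finset.prod_ite_eq, Finset.prod_ite_eq]
    simp [wt]
  rw [Finset.sum_congr rfl (fun x _ => hrw x)]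
  rw [← Fintype.prod_sum (fun (k : Fin n) (b : Bool) => ((if b then r else 1-r)
    * (if i = k then ((if b then (1:ℝ) else 0) - r) else 1)
    * (if j = k then ((if b then (1:ℝ) else 0) - r) else 1)))]
  by_cases hij : i = j
  · subst hij
    have hfac : ∀ k : Fin n, (∑ b : Bool, ((if b then r else 1-r)
        * (if i = k then ((if b then (1:ℝ) else 0) - r) else 1)
        * (if i = k then ((if b then (1:ℝ) else 0) - r) else 1)))
        = if i = k then r*(1-r) else 1 := by
      intro k
      rw [Fintype.sum_bool]
      by_cases h : i = k <;> simp [h] <;> ring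
    rw [Finset.prod_congr rfl (fun k _ => hfac k)]
    rw [Finset.prod_ite_eq]
    simp
  · rw [if_neg hij]
    apply Finset.prod_eq_zero (Finset.mem_univ i)
    rw [Fintype.sum_bool]
    rw [if_pos rfl, if_pos rfl, if_neg (Ne.symm hij), if_neg (Ne.symm hij)]
    simp
    ring


lemma var_wt (n : ℕ) (r : ℝ) :
    ∑ x : Fin n → Bool, wt n r x * (cnt n x - r*n)^2 = n * (r*(1-r)) := by
  have expand : ∀ x : Fin n → Bool, cnt n x - r*n
      = ∑ i, ((if x i then (1:ℝ) else 0) - r) := by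
    intro x
    rw [Finset.sum_sub_distrib]
    simp [cnt, mul_comm]
  have sq : ∀ x : Fin n → Bool, wt n r x * (cnt n x - r*n)^2
      = ∑ i, ∑ j, wt n r x * ((if x i then (1:ℝ) else 0) - r) * ((if x j then (1:ℝ) else 0) - r) := by
    intro x
    rw [expand x, sq, Finset.sum_mul_sum]
    rw [Finset.mul_sum]
    apply Finset.sum_congr rfl
    intro i _
    rw [Finset.mul_sum]
    apply Finset.sum_congr rfl
    intro j _
    ring
  rw [Finset.sum_congr rfl (fun x _ => sq x)]
  rw [Finset.sum_comm]
  have hinner : ∀ i : Fin n, (∑ x : Fin n → Bool, ∑ j : Fin n,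
      wt n r x * ((if x i then (1:ℝ) else 0) - r) * ((if x j then (1:ℝ) else 0) - r))
      = r * (1-r) := by
    intro i
    rw [Finset.sum_comm]
    have : ∀ j : Fin n, (∑ x : Fin n → Bool,
        wt n r x * ((if x i then (1:ℝ) else 0) - r) * ((if x j then (1:ℝ) else 0) - r))
        = if i = j then r*(1-r) else 0 := fun j => cross r i j
    rw [Finset.sum_congr rfl (fun j _ => this j)]
    rw [Finset.sum_ite_eq]
    simp
  rw [Finset.sum_congr rfl (fun i _ => hinner i)]
  rw [Finset.sum_const, Finset.card_univ, Fintype.card_fin, nsmul_eq_mul]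

lemma cheb (n : ℕ) (r ρ : ℝ) (hr0 : 0 ≤ r) (hr1 : r ≤ 1) (hρ : 0 < ρ) (hn : 0 < n) :
    1 - r*(1-r)/(ρ^2*n) ≤ ∑ x ∈ Finset.univ.filter
      (fun x => |cnt n x - r*n| ≤ ρ*n), wt n r x := by
  have hsplit := Finset.sum_filter_add_sum_filter_not Finset.univ
    (fun x => |cnt n x - r*n| ≤ ρ*n) (wt n r)
  rw [sum_wt n r] at hsplit
  have hbad : ∑ x ∈ Finset.univ.filter (fun x => ¬ |cnt n x - r*n| ≤ ρ*n), wt n r x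
      ≤ r*(1-r)/(ρ^2*n) := by
    have h1 : ∀ x ∈ Finset.univ.filter (fun x : Fin n → Bool => ¬ |cnt n x - r*n| ≤ ρ*n),
        wt n r x ≤ wt n r x * (cnt n x - r*n)^2 / (ρ^2 * n^2) := by
      intro x hx
      rw [Finset.mem_filter] at hx
      have h2 : ρ * n < |cnt n x - r*n| := lt_of_not_ge hx.2
      have h3 : (ρ*n)^2 ≤ (cnt n x - r*n)^2 := by
        rw [← sq_abs (cnt n x - r*n)]
        apply pow_le_pow_left₀ (by positivity) (le_of_lt h2)
      have hw := wt_nonneg hr0 hr1 x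
      rw [le_div_iff₀ (by positivity)]
      nlinarith
    calc ∑ x ∈ Finset.univ.filter (fun x : Fin n → Bool => ¬ |cnt n x - r*n| ≤ ρ*n), wt n r x
        ≤ ∑ x ∈ Finset.univ.filter (fun x : Fin n → Bool => ¬ |cnt n x - r*n| ≤ ρ*n),
          wt n r x * (cnt n x - r*n)^2 / (ρ^2 * n^2) := Finset.sum_le_sum h1
      _ ≤ ∑ x : Fin n → Bool, wt n r x * (cnt n x - r*n)^2 / (ρ^2 * n^2) := by
          apply Finset.sum_le_sum_of_subset_of_nonneg (Finset.filter_subset _ _)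
          intro x _ _
          have hw := wt_nonneg hr0 hr1 x
          positivity
      _ = (∑ x : Fin n → Bool, wt n r x * (cnt n x - r*n)^2) / (ρ^2 * n^2) := by
          rw [← Finset.sum_div]
      _ = n * (r*(1-r)) / (ρ^2 * n^2) := by rw [var_wt]
      _ = r*(1-r)/(ρ^2*n) := by
          field_simp
  linarith


def tc (n : ℕ) (x : Fin n → Bool) : ℕ := (Finset.univ.filter (fun i => x i)).card

lemma cnt_eq_tc (n : ℕ) (x : Fin n → Bool) : cnt n x = tc n x := by
  simp [cnt, tc]

lemma tc_le (n : ℕ) (x : Fin n → Bool) : tc n x ≤ n := by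
  calc tc n x ≤ Finset.univ.card := Finset.card_filter_le _ _
    _ = n := by simp

lemma wt_eq_pow (n : ℕ) (r : ℝ) (x : Fin n → Bool) :
    wt n r x = r^(tc n x) * (1-r)^(n - tc n x) := by
  unfold wt
  rw [← Finset.prod_filter_mul_prod_filter_not Finset.univ (fun i => x i)]
  congr 1
  · trans (∏ _i ∈ Finset.univ.filter (fun i => x i = true), r)
    · exact Finset.prod_congr rfl (fun i hi => by
        rw [Finset.mem_filter] at hi
        rw [if_pos hi.2])
    · rw [Finset.prod_const]
      rfl
  · trans (∏ _i ∈ Finset.univ.filter (fun i => ¬ x i = true), (1-r))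
    · exact Finset.prod_congr rfl (fun i hi => by
        rw [Finset.mem_filter] at hi
        rw [if_neg hi.2])
    · rw [Finset.prod_const]
      congr 1
      have := Finset.card_filter_add_card_filter_not (s := (Finset.univ : Finset (Fin n)))
        (p := fun i => x i = true)
      simp only [Finset.card_univ, Fintype.card_fin] at this
      unfold tc
      omega

lemma meas_eq (n : ℕ) (p : ℝ) (hp0 : 0 ≤ p) (hp1 : p ≤ 1) (A : Set (Fin n → Bool)) :
    ((Measure.pi fun _ : Fin n => (ENNReal.ofReal p • Measure.dirac true
      + ENNReal.ofReal (1 - p) • Measure.dirac false)) A).toReal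
    = ∑ x ∈ Finset.univ.filter (· ∈ A), wt n p x := by
  set ber : Measure Bool := ENNReal.ofReal p • Measure.dirac true
      + ENNReal.ofReal (1 - p) • Measure.dirac false with hber
  haveI : IsFiniteMeasure ber := by
    constructor
    rw [hber]
    simp only [Measure.coe_add, Pi.add_apply, Measure.smul_apply, smul_eq_mul,
      Measure.dirac_apply, Set.indicator, Set.mem_univ, if_pos, Pi.one_apply, mul_one]
    exact ENNReal.add_lt_top.2 ⟨ENNReal.ofReal_lt_top, ENNReal.ofReal_lt_top⟩
  have hsingle : ∀ x : Fin n → Bool,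
      (Measure.pi fun _ : Fin n => ber) {x} = ENNReal.ofReal (wt n p x) := by
    intro x
    rw [← Set.univ_pi_singleton x, Measure.pi_pi]
    have hb : ∀ i : Fin n, ber {x i} = ENNReal.ofReal (if x i then p else 1-p) := by
      intro i
      rw [hber]
      by_cases h : x i <;>
        simp [h, Measure.dirac_apply, Set.indicator, Measure.add_apply, Measure.smul_apply]
    rw [Finset.prod_congr rfl (fun i _ => hb i)]
    rw [← ENNReal.ofReal_prod_of_nonneg (fun i _ => by by_cases h : x i <;> simp [h] <;> linarith)]
    rfl
  have hA : A = ⋃ x ∈ (Finset.univ.filter (· ∈ A) : Finset (Fin n → Bool)), ({x} : Set (Fin n → Bool)) := by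
    ext y
    simp
  conv_lhs => rw [hA]
  rw [measure_biUnion_finset ?_ ?_]
  · rw [Finset.sum_congr rfl (fun x _ => hsingle x)]
    rw [ENNReal.toReal_sum (fun x _ => ENNReal.ofReal_ne_top)]
    exact Finset.sum_congr rfl (fun x _ => ENNReal.toReal_ofReal (wt_nonneg hp0 hp1 x))
  · intro x hx y hy hxy
    simp only [Set.disjoint_singleton_left, Set.mem_singleton_iff]
    exact hxy
  · intro x _
    exact measurableSet_singleton x

lemma point_le (n k : ℕ) (p r c : ℝ) (hp0 : 0 < p) (hp1 : p < 1) (hr0 : 0 < r) (hr1 : r < 1)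
    (hlog : c + k * Real.log r + (n - k : ℝ) * Real.log (1-r)
      ≤ k * Real.log p + (n - k : ℝ) * Real.log (1-p)) (hkn : k ≤ n) :
    Real.exp c * (r^k * (1-r)^(n-k)) ≤ p^k * (1-p)^(n-k) := by
  have h1r : (0:ℝ) < 1 - r := by linarith
  have h1p : (0:ℝ) < 1 - p := by linarith
  have hcast : (n : ℝ) - k = ((n - k : ℕ) : ℝ) := by
    rw [Nat.cast_sub hkn]
  have e1 : r^k * (1-r)^(n-k) = Real.exp (k * Real.log r + (n - k : ℝ) * Real.log (1-r)) := by
    rw [hcast, Real.exp_add, ← Real.log_pow, ← Real.log_pow, Real.exp_log (by positivity),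
      Real.exp_log (by positivity)]
  have e2 : p^k * (1-p)^(n-k) = Real.exp (k * Real.log p + (n - k : ℝ) * Real.log (1-p)) := by
    rw [hcast, Real.exp_add, ← Real.log_pow, ← Real.log_pow, Real.exp_log (by positivity),
      Real.exp_log (by positivity)]
  rw [e1, e2, ← Real.exp_add]
  exact Real.exp_le_exp.2 (by linarith)

lemma key (n : ℕ) (hn : 0 < n) (p r ρ c : ℝ) (hp0 : 0 ≤ p) (hp1 : p ≤ 1)
    (hr0 : 0 ≤ r) (hr1 : r ≤ 1) (hρ : 0 < ρ)
    (A : Set (Fin n → Bool))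
    (hsub : ∀ x : Fin n → Bool, |cnt n x - r*n| ≤ ρ*n → x ∈ A)
    (hwt : ∀ x : Fin n → Bool, |cnt n x - r*n| ≤ ρ*n → Real.exp c * wt n r x ≤ wt n p x) :
    Real.exp c * (1 - r*(1-r)/(ρ^2*n)) ≤ ∑ x ∈ Finset.univ.filter (· ∈ A), wt n p x := by
  calc Real.exp c * (1 - r*(1-r)/(ρ^2*n))
      ≤ Real.exp c * ∑ x ∈ Finset.univ.filter (fun x => |cnt n x - r*n| ≤ ρ*n), wt n r x :=
        mul_le_mul_of_nonneg_left (cheb n r ρ hr0 hr1 hρ hn) (Real.exp_pos c).le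
    _ = ∑ x ∈ Finset.univ.filter (fun x => |cnt n x - r*n| ≤ ρ*n), Real.exp c * wt n r x := by
        rw [Finset.mul_sum]
    _ ≤ ∑ x ∈ Finset.univ.filter (fun x => |cnt n x - r*n| ≤ ρ*n), wt n p x := by
        apply Finset.sum_le_sum
        intro x hx
        rw [Finset.mem_filter] at hx
        exact hwt x hx.2
    _ ≤ ∑ x ∈ Finset.univ.filter (· ∈ A), wt n p x := by
        apply Finset.sum_le_sum_of_subset_of_nonneg
        · intro x hx
          rw [Finset.mem_filter] at hx ⊢
          exact ⟨hx.1, hsub x hx.2⟩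
        · exact fun x _ _ => wt_nonneg hp0 hp1 x


-- generic scaffold for a tilt argument
lemma tilt (n : ℕ) (p r ρ m E : ℝ) (hp0 : 0 < p) (hp1 : p < 1) (hr0 : 0 < r) (hr1 : r < 1)
    (hρ : 0 < ρ) (hn : 0 < n) (hm : 0 < m) (hm1 : m ≤ 1)
    (A : Set (Fin n → Bool))
    (hsub : ∀ x : Fin n → Bool, |cnt n x - r*n| ≤ ρ*n → x ∈ A)
    (hB : r*(1-r)/(ρ^2*n) ≤ 1 - m)
    -- monotone bound: for every real κ in the window-range (κ = k), the log-cost is OK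
    (hcore : ∀ κ : ℝ, 0 ≤ κ → κ ≤ n → |κ - r*n| ≤ ρ*n →
      -9*E*n + Real.log (1/m) ≤ κ * (Real.log p - Real.log r)
        + (n - κ) * (Real.log (1-p) - Real.log (1-r))) :
    Real.exp (-9*E*n) ≤ ∑ x ∈ Finset.univ.filter (· ∈ A), wt n p x := by
  have hkey := key n hn p r ρ (-9*E*n + Real.log (1/m)) hp0.le hp1.le hr0.le hr1.le hρ A hsub ?_
  · calc Real.exp (-9*E*n) = Real.exp (-9*E*n + Real.log (1/m)) * m := by
          rw [Real.exp_add, Real.exp_log (by positivity)]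
          field_simp
      _ ≤ Real.exp (-9*E*n + Real.log (1/m)) * (1 - r*(1-r)/(ρ^2*n)) := by
          apply mul_le_mul_of_nonneg_left _ (Real.exp_pos _).le
          linarith
      _ ≤ _ := hkey
  · intro x hx
    rw [wt_eq_pow n r x, wt_eq_pow n p x]
    apply point_le n (tc n x) p r _ hp0 hp1 hr0 hr1 _ (tc_le n x)
    rw [cnt_eq_tc] at hx
    have h0 : (0:ℝ) ≤ (tc n x : ℝ) := Nat.cast_nonneg _
    have h1 : ((tc n x : ℕ) : ℝ) ≤ (n:ℝ) := Nat.cast_le.2 (tc_le n x)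
    have := hcore (tc n x) h0 h1 hx
    linarith


lemma polyL1 (p δ x : ℝ) (hp0 : 0 < p) (hp : p ≤ 2/5) (hδ0 : 0 < δ) (hδ : δ ≤ 1/4)
    (hx0 : 0 ≤ x) (hxub : x ≤ (4/3)*δ) (hxval : x * (1-p) = 2*δ*p) :
    -(53/6)*(δ^2*p) ≤ (1-3*δ)*p*(2*δ + 2*δ^2) - (1-(1-3*δ)*p)*(x - x^2/2 + x^3/3) := by
  have esub : (1-(1-3*δ)*p)*(x - x^2/2 + x^3/3)
      = 2*δ*p + 2*δ*p*x - (5/6)*δ*p*x^2 + δ*p*x^3 := by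
    linear_combination (1 - x/2 + x^2/3) * hxval
  rw [esub]
  have hdp : (0:ℝ) ≤ 2*δ*p := by positivity
  have t1 : 2*δ*p*x ≤ (8/3)*δ^2*p := by nlinarith [mul_le_mul_of_nonneg_left hxub hdp]
  have hx3 : x^3 ≤ (64/27)*δ^3 := by
    nlinarith [mul_nonneg (sub_nonneg.2 hxub)
      (by positivity : (0:ℝ) ≤ x^2 + (4/3)*δ*x + (16/9)*δ^2)]
  have hd16 : δ^2 ≤ 1/16 := by nlinarith
  have hd4 : δ^4 ≤ (1/16)*δ^2 := by
    nlinarith [mul_le_mul_of_nonneg_right hd16 (sq_nonneg δ)]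
  have t2 : δ*p*x^3 ≤ (4/27)*δ^2*p := by
    nlinarith [mul_le_mul_of_nonneg_left hx3 (by positivity : (0:ℝ) ≤ δ*p),
      mul_le_mul_of_nonneg_right hd4 hp0.le]
  have t3 : 6*δ^3*p ≤ (3/2)*δ^2*p := by nlinarith
  have t4 : 0 ≤ (5/6)*δ*p*x^2 := by positivity
  nlinarith

lemma coreL1 (n : ℕ) (p δ a b : ℝ) (hp0 : 0 < p) (hp : p ≤ 2/5) (hδ0 : 0 < δ) (hδ : δ ≤ 1/4)
    (hn : 3 ≤ δ^2*p*n) (hnr : 0 < (n:ℝ))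
    (hA : 2*δ + 2*δ^2 ≤ a)
    (hBb : -((2*δ*p/(1-p)) - (2*δ*p/(1-p))^2/2 + (2*δ*p/(1-p))^3/3) ≤ b) :
    -9*(δ^2*p)*n + 1/2 ≤ ((1-3*δ)*p*n) * a + (n - (1-3*δ)*p*n) * b := by
  have hq : (0:ℝ) < 1 - p := by linarith
  obtain ⟨x, hxdef⟩ : ∃ x : ℝ, x = 2*δ*p/(1-p) := ⟨_, rfl⟩
  rw [← hxdef] at hBb
  have hxval : x * (1-p) = 2*δ*p := by
    rw [hxdef]; field_simp
  have hx0 : 0 ≤ x := by rw [hxdef]; positivity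
  have hxub : x ≤ (4/3)*δ := by
    rw [hxdef, div_le_iff₀ hq]
    nlinarith
  have hpoly := polyL1 p δ x hp0 hp hδ0 hδ hx0 hxub hxval
  have hcoef : 0 ≤ (n:ℝ) - (1-3*δ)*p*n := by nlinarith
  have hstep1 : ((1-3*δ)*p*n) * (2*δ + 2*δ^2) ≤ ((1-3*δ)*p*n) * a :=
    mul_le_mul_of_nonneg_left hA (by nlinarith)
  have hstep2 : ((n:ℝ) - (1-3*δ)*p*n) * (-(x - x^2/2 + x^3/3)) ≤ ((n:ℝ) - (1-3*δ)*p*n) * b :=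
    mul_le_mul_of_nonneg_left hBb hcoef
  have hhalf : (1:ℝ)/2 ≤ (1/6)*(δ^2*p)*n := by nlinarith
  have hpolyn := mul_le_mul_of_nonneg_right hpoly hnr.le
  nlinarith [hstep1, hstep2, hpolyn, hhalf]

lemma caseL1 (n : ℕ) (p δ : ℝ) (hp0 : 0 < p) (hp : p ≤ 2/5) (hδ0 : 0 < δ) (hδ : δ ≤ 1/4)
    (hn : 3 ≤ δ^2*p*n) (hn0 : 0 < n) :
    Real.exp (-9*(δ^2*p)*n) ≤ ∑ x ∈ Finset.univ.filter
      (· ∈ {x : Fin n → Bool | cnt n x ≤ (1-δ)*p*n}), wt n p x := by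
  have hq : (0:ℝ) < 1 - p := by linarith
  have hnr : (0:ℝ) < n := by
    have : (0:ℝ) < δ^2*p := by positivity
    nlinarith
  apply tilt n p ((1-2*δ)*p) (δ*p) (2/3) (δ^2*p) hp0 (by linarith)
    (by nlinarith) (by nlinarith) (by positivity) hn0 (by norm_num) (by norm_num)
  · intro x hx
    rw [abs_le] at hx
    simp only [Set.mem_setOf_eq]
    nlinarith [hx.2]
  · -- Chebyshev bound : r(1-r)/(ρ²n) ≤ 1/3
    rw [div_le_iff₀ (by positivity)]
    have e1 : (1-2*δ)*p ≤ p := by nlinarith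
    have e2 : 1-(1-2*δ)*p ≤ 1 := by nlinarith
    have e0 : 0 ≤ (1-2*δ)*p := by nlinarith
    have h1 : (1-2*δ)*p*(1-(1-2*δ)*p) ≤ p := by nlinarith [mul_le_mul e1 e2 (by nlinarith) hp0.le]
    nlinarith
  · intro κ hκ0 hκn hw
    rw [abs_le] at hw
    have hklo : (1-3*δ)*p*n ≤ κ := by nlinarith [hw.1]
    -- log identities
    have ha : Real.log p - Real.log ((1-2*δ)*p) = -Real.log (1-2*δ) := by
      rw [Real.log_mul (by linarith) (by linarith)]
      ring
    have hb : Real.log (1-p) - Real.log (1-(1-2*δ)*p)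
        = -Real.log (1+2*δ*p/(1-p)) := by
      have h2 : 1-(1-2*δ)*p = (1-p)*(1+2*δ*p/(1-p)) := by field_simp; ring
      rw [h2, Real.log_mul (by linarith) (by positivity)]
      ring
    rw [ha, hb]
    obtain ⟨a, hadef⟩ : ∃ a : ℝ, a = -Real.log (1-2*δ) := ⟨_, rfl⟩
    obtain ⟨b, hbdef⟩ : ∃ b : ℝ, b = -Real.log (1+2*δ*p/(1-p)) := ⟨_, rfl⟩
    rw [← hadef, ← hbdef]
    have ha0 : 0 ≤ a := by
      rw [hadef, neg_nonneg]
      apply Real.log_nonpos (by linarith) (by linarith)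
    have hb0 : b ≤ 0 := by
      rw [hbdef, neg_nonpos]
      apply Real.log_nonneg (by nlinarith [div_nonneg (by nlinarith : (0:ℝ) ≤ 2*δ*p) hq.le])
    -- monotone in κ step
    have hmono : ((1-3*δ)*p*n) * a + (n - (1-3*δ)*p*n) * b ≤ κ * a + (n - κ) * b := by
      nlinarith [mul_le_mul_of_nonneg_right hklo ha0]
    -- core analytic inequality
    have hlog32 : Real.log (1/(2/3)) ≤ 1/2 := by
      norm_num
      calc Real.log (3/2) ≤ 3/2 - 1 := Real.log_le_sub_one_of_pos (by norm_num)
        _ = 1/2 := by norm_num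
    have hA : 2*δ + 2*δ^2 ≤ a := by
      have := neg_log_taylor_lb (x := 2*δ) (by linarith) (by linarith)
      rw [hadef]
      nlinarith [this]
    have hxq : (0:ℝ) ≤ 2*δ*p/(1-p) := by positivity
    have hBb : -( (2*δ*p/(1-p)) - (2*δ*p/(1-p))^2/2 + (2*δ*p/(1-p))^3/3 ) ≤ b := by
      have := log_taylor_ub hxq
      rw [hbdef]
      linarith
    -- final polynomial inequality
    have hcore := coreL1 n p δ a b hp0 hp hδ0 hδ hn hnr hA hBb
    linarith [hcore, hmono, hlog32]


lemma log3_le : Real.log 3 ≤ 111/100 := by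
  rw [Real.log_le_iff_le_exp (by norm_num)]
  have h1 : (111/100:ℝ) = 1 + 0.11 := by norm_num
  rw [h1, Real.exp_add]
  have h2 := Real.exp_one_gt_d9
  have h3 : (0.11:ℝ) + 1 ≤ Real.exp 0.11 := Real.add_one_le_exp 0.11
  nlinarith [Real.exp_pos (0.11:ℝ)]

lemma log6_le : Real.log 6 ≤ 2 := by
  rw [Real.log_le_iff_le_exp (by norm_num)]
  have h1 : (2:ℝ) = 1 + 1 := by norm_num
  rw [h1, Real.exp_add]
  have h2 := Real.exp_one_gt_d9
  nlinarith [Real.exp_pos (1:ℝ)]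

lemma polyL2 (p δ x : ℝ) (hp0 : 0 < p) (hp : p ≤ 1/2) (hδ0 : 0 < δ) (hδ : δ ≤ 1/2)
    (hx0 : 0 ≤ x) (hxub : x ≤ (3/2)*δ) (hxval : x * (1-p) = (3/2)*δ*p) :
    -(25/3)*(δ^2*p) ≤ (1-2*δ)*p*((3/2)*δ + (9/8)*δ^2)
      - (1-(1-2*δ)*p)*(x - x^2/2 + x^3/3) := by
  have esub : (1-(1-2*δ)*p)*(x - x^2/2 + x^3/3)
      = (3/2)*δ*p + (5/4)*δ*p*x - (1/2)*δ*p*x^2 + (2/3)*δ*p*x^3 := by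
    linear_combination (1 - x/2 + x^2/3) * hxval
  rw [esub]
  have hdp : (0:ℝ) ≤ δ*p := by positivity
  have t1 : (5/4)*δ*p*x ≤ (15/8)*δ^2*p := by nlinarith [mul_le_mul_of_nonneg_left hxub hdp]
  have hx3 : x^3 ≤ (27/8)*δ^3 := by
    nlinarith [mul_nonneg (sub_nonneg.2 hxub)
      (by positivity : (0:ℝ) ≤ x^2 + (3/2)*δ*x + (9/4)*δ^2)]
  have hd16 : δ^2 ≤ 1/4 := by nlinarith
  have hd4 : δ^4 ≤ (1/4)*δ^2 := by
    nlinarith [mul_le_mul_of_nonneg_right hd16 (sq_nonneg δ)]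
  have t2 : (2/3)*δ*p*x^3 ≤ (9/16)*δ^2*p := by
    nlinarith [mul_le_mul_of_nonneg_left hx3 (by positivity : (0:ℝ) ≤ δ*p),
      mul_le_mul_of_nonneg_right hd4 hp0.le]
  have t3 : (9/4)*δ^3*p ≤ (9/8)*δ^2*p := by nlinarith
  have t4 : 0 ≤ (1/2)*δ*p*x^2 := by positivity
  nlinarith

lemma coreL2 (n : ℕ) (p δ a b : ℝ) (hp0 : 0 < p) (hp : p ≤ 1/2) (hδ0 : 0 < δ) (hδ : δ ≤ 1/2)
    (hn : 3 ≤ δ^2*p*n) (hnr : 0 < (n:ℝ))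
    (hA : (3/2)*δ + (9/8)*δ^2 ≤ a)
    (hBb : -(((3/2)*δ*p/(1-p)) - ((3/2)*δ*p/(1-p))^2/2 + ((3/2)*δ*p/(1-p))^3/3) ≤ b) :
    -9*(δ^2*p)*n + 2 ≤ ((1-2*δ)*p*n) * a + (n - (1-2*δ)*p*n) * b := by
  have hq : (0:ℝ) < 1 - p := by linarith
  obtain ⟨x, hxdef⟩ : ∃ x : ℝ, x = (3/2)*δ*p/(1-p) := ⟨_, rfl⟩
  rw [← hxdef] at hBb
  have hxval : x * (1-p) = (3/2)*δ*p := by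
    rw [hxdef]; field_simp
  have hx0 : 0 ≤ x := by rw [hxdef]; positivity
  have hxub : x ≤ (3/2)*δ := by
    rw [hxdef, div_le_iff₀ hq]
    nlinarith
  have hpoly := polyL2 p δ x hp0 hp hδ0 hδ hx0 hxub hxval
  have hcoef : 0 ≤ (n:ℝ) - (1-2*δ)*p*n := by nlinarith
  have hstep1 : ((1-2*δ)*p*n) * ((3/2)*δ + (9/8)*δ^2) ≤ ((1-2*δ)*p*n) * a :=
    mul_le_mul_of_nonneg_left hA
      (mul_nonneg (mul_nonneg (by linarith : (0:ℝ) ≤ 1-2*δ) hp0.le) hnr.le)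
  have hstep2 : ((n:ℝ) - (1-2*δ)*p*n) * (-(x - x^2/2 + x^3/3)) ≤ ((n:ℝ) - (1-2*δ)*p*n) * b :=
    mul_le_mul_of_nonneg_left hBb hcoef
  have hhalf : (2:ℝ) ≤ (2/3)*(δ^2*p)*n := by nlinarith
  have hpolyn := mul_le_mul_of_nonneg_right hpoly hnr.le
  nlinarith [hstep1, hstep2, hpolyn, hhalf]

lemma caseL2 (n : ℕ) (p δ : ℝ) (hp0 : 0 < p) (hp : p ≤ 1/2) (hδ0 : 0 < δ) (hδ : δ ≤ 1/2)
    (hcase : 1/4 < δ ∨ 2/5 < p)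
    (hn : 3 ≤ δ^2*p*n) (hn0 : 0 < n) :
    Real.exp (-9*(δ^2*p)*n) ≤ ∑ x ∈ Finset.univ.filter
      (· ∈ {x : Fin n → Bool | cnt n x ≤ (1-δ)*p*n}), wt n p x := by
  have hq : (0:ℝ) < 1 - p := by linarith
  have hnr : (0:ℝ) < n := by
    have : (0:ℝ) < δ^2*p := by positivity
    nlinarith
  apply tilt n p ((1-(3/2)*δ)*p) (δ*p/2) (1/6) (δ^2*p) hp0 (by linarith)
    (by nlinarith) (by nlinarith) (by positivity) hn0 (by norm_num) (by norm_num)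
  · intro x hx
    rw [abs_le] at hx
    simp only [Set.mem_setOf_eq]
    nlinarith [hx.2]
  · -- Chebyshev bound : r(1-r)/(ρ²n) ≤ 5/6
    rw [div_le_iff₀ (by positivity)]
    have hrr : (1-(3/2)*δ)*p*(1-(1-(3/2)*δ)*p) ≤ (5/8)*p := by
      rcases hcase with h | h
      · have e1 : (1-(3/2)*δ)*p ≤ (5/8)*p := by nlinarith
        have e2 : 1-(1-(3/2)*δ)*p ≤ 1 := by nlinarith
        nlinarith [mul_le_mul e1 e2 (by nlinarith) (by positivity : (0:ℝ) ≤ (5/8)*p)]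
      · have e3 : (1-(3/2)*δ)*p*(1-(1-(3/2)*δ)*p) ≤ 1/4 := by
          nlinarith [sq_nonneg (2*((1-(3/2)*δ)*p) - 1)]
        nlinarith
    nlinarith
  · intro κ hκ0 hκn hw
    rw [abs_le] at hw
    have hklo : (1-2*δ)*p*n ≤ κ := by nlinarith [hw.1]
    have ha : Real.log p - Real.log ((1-(3/2)*δ)*p) = -Real.log (1-(3/2)*δ) := by
      rw [Real.log_mul (by linarith) (by linarith)]
      ring
    have hb : Real.log (1-p) - Real.log (1-(1-(3/2)*δ)*p)
        = -Real.log (1+(3/2)*δ*p/(1-p)) := by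
      have h2 : 1-(1-(3/2)*δ)*p = (1-p)*(1+(3/2)*δ*p/(1-p)) := by field_simp; ring
      rw [h2, Real.log_mul (by linarith) (by positivity)]
      ring
    rw [ha, hb]
    obtain ⟨a, hadef⟩ : ∃ a : ℝ, a = -Real.log (1-(3/2)*δ) := ⟨_, rfl⟩
    obtain ⟨b, hbdef⟩ : ∃ b : ℝ, b = -Real.log (1+(3/2)*δ*p/(1-p)) := ⟨_, rfl⟩
    rw [← hadef, ← hbdef]
    have ha0 : 0 ≤ a := by
      rw [hadef, neg_nonneg]
      apply Real.log_nonpos (by linarith) (by linarith)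
    have hb0 : b ≤ 0 := by
      rw [hbdef, neg_nonpos]
      apply Real.log_nonneg
      have : (0:ℝ) ≤ (3/2)*δ*p/(1-p) := by positivity
      linarith
    have hmono : ((1-2*δ)*p*n) * a + (n - (1-2*δ)*p*n) * b ≤ κ * a + (n - κ) * b := by
      nlinarith [mul_le_mul_of_nonneg_right hklo ha0]
    have hlog6 : Real.log (1/(1/6 : ℝ)) ≤ 2 := by
      norm_num
      exact log6_le
    have hA : (3/2)*δ + (9/8)*δ^2 ≤ a := by
      have := neg_log_taylor_lb (x := (3/2)*δ) (by linarith) (by linarith)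
      rw [hadef]
      nlinarith [this]
    have hBb : -((((3/2)*δ*p/(1-p))) - (((3/2)*δ*p/(1-p)))^2/2 + (((3/2)*δ*p/(1-p)))^3/3) ≤ b := by
      have := log_taylor_ub (x := (3/2)*δ*p/(1-p)) (by positivity)
      rw [hbdef]
      linarith
    have hcore := coreL2 n p δ a b hp0 hp hδ0 hδ hn hnr hA hBb
    linarith [hcore, hmono, hlog6]


lemma polyU1 (p δ y : ℝ) (hp0 : 0 < p) (hp : p ≤ 2/5) (hδ0 : 0 < δ) (hδ : δ ≤ 1/2)
    (hy0 : 0 ≤ y) (hyub : y ≤ (4/3)*δ) (hyval : y * (1-p) = 2*δ*p) :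
    -(25/3)*(δ^2*p) ≤ -((1+3*δ)*p*(2*δ-2*δ^2+(8/3)*δ^3))
      + (1-(1+3*δ)*p)*(y + y^2/2) := by
  have esub : (1-(1+3*δ)*p)*(y + y^2/2) = 2*δ*p - 2*δ*p*y - (3/2)*δ*p*y^2 := by
    linear_combination (1 + y/2) * hyval
  rw [esub]
  have hdp : (0:ℝ) ≤ δ*p := by positivity
  have t1 : 2*δ*p*y ≤ (8/3)*δ^2*p := by nlinarith [mul_le_mul_of_nonneg_left hyub hdp]
  have hy2 : y^2 ≤ (16/9)*δ^2 := by nlinarith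
  have t2 : (3/2)*δ*p*y^2 ≤ (8/3)*δ^3*p := by
    nlinarith [mul_le_mul_of_nonneg_left hy2 (by positivity : (0:ℝ) ≤ δ*p)]
  have hd3 : δ^3 ≤ (1/2)*δ^2 := by nlinarith
  have hd4 : δ^4 ≤ (1/2)*δ^3 := by nlinarith [sq_nonneg δ, mul_le_mul_of_nonneg_right hd3 hδ0.le]
  have t3 : 8*δ^4*p ≤ 4*δ^3*p := by nlinarith [mul_le_mul_of_nonneg_right hd4 hp0.le]
  have t4 : (20/3)*δ^3*p ≤ (10/3)*δ^2*p := by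
    nlinarith [mul_le_mul_of_nonneg_right hd3 hp0.le]
  nlinarith

lemma coreU1 (n : ℕ) (p δ a b : ℝ) (hp0 : 0 < p) (hp : p ≤ 2/5) (hδ0 : 0 < δ) (hδ : δ ≤ 1/2)
    (hn : 3 ≤ δ^2*p*n) (hnr : 0 < (n:ℝ))
    (hA : -(2*δ-2*δ^2+(8/3)*δ^3) ≤ a)
    (hBb : (2*δ*p/(1-p)) + (2*δ*p/(1-p))^2/2 ≤ b) :
    -9*(δ^2*p)*n + 111/100 ≤ ((1+3*δ)*p*n) * a + (n - (1+3*δ)*p*n) * b := by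
  have hq : (0:ℝ) < 1 - p := by linarith
  obtain ⟨y, hydef⟩ : ∃ y : ℝ, y = 2*δ*p/(1-p) := ⟨_, rfl⟩
  rw [← hydef] at hBb
  have hyval : y * (1-p) = 2*δ*p := by
    rw [hydef]; field_simp
  have hy0 : 0 ≤ y := by rw [hydef]; positivity
  have hyub : y ≤ (4/3)*δ := by
    rw [hydef, div_le_iff₀ hq]
    nlinarith
  have hpoly := polyU1 p δ y hp0 hp hδ0 hδ hy0 hyub hyval
  have hth : (1+3*δ)*p ≤ 1 := by nlinarith
  have hcoef : 0 ≤ (n:ℝ) - (1+3*δ)*p*n := by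
    nlinarith [mul_nonneg (by linarith : (0:ℝ) ≤ 1 - (1+3*δ)*p) hnr.le]
  have hstep1 : ((1+3*δ)*p*n) * (-(2*δ-2*δ^2+(8/3)*δ^3)) ≤ ((1+3*δ)*p*n) * a :=
    mul_le_mul_of_nonneg_left hA (by positivity)
  have hstep2 : ((n:ℝ) - (1+3*δ)*p*n) * (y + y^2/2) ≤ ((n:ℝ) - (1+3*δ)*p*n) * b :=
    mul_le_mul_of_nonneg_left hBb hcoef
  have hhalf : (111/100:ℝ) ≤ (2/3)*(δ^2*p)*n := by nlinarith
  have hpolyn := mul_le_mul_of_nonneg_right hpoly hnr.le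
  nlinarith [hstep1, hstep2, hpolyn, hhalf]

lemma caseU1 (n : ℕ) (p δ : ℝ) (hp0 : 0 < p) (hp : p ≤ 2/5) (hδ0 : 0 < δ) (hδ : δ ≤ 1/2)
    (hn : 3 ≤ δ^2*p*n) (hn0 : 0 < n) :
    Real.exp (-9*(δ^2*p)*n) ≤ ∑ x ∈ Finset.univ.filter
      (· ∈ {x : Fin n → Bool | cnt n x ≥ (1+δ)*p*n}), wt n p x := by
  have hq : (0:ℝ) < 1 - p := by linarith
  have hnr : (0:ℝ) < n := by
    have : (0:ℝ) < δ^2*p := by positivity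
    nlinarith
  apply tilt n p ((1+2*δ)*p) (δ*p) (1/3) (δ^2*p) hp0 (by linarith)
    (by positivity) (by nlinarith) (by positivity) hn0 (by norm_num) (by norm_num)
  · intro x hx
    rw [abs_le] at hx
    simp only [Set.mem_setOf_eq]
    nlinarith [hx.1]
  · rw [div_le_iff₀ (by positivity)]
    have e1 : (1+2*δ)*p*(1-(1+2*δ)*p) ≤ 2*p := by
      nlinarith [mul_le_mul (by nlinarith : (1+2*δ)*p ≤ 2*p)
        (by nlinarith : 1-(1+2*δ)*p ≤ 1) (by nlinarith) (by positivity : (0:ℝ) ≤ 2*p)]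
    nlinarith
  · intro κ hκ0 hκn hw
    rw [abs_le] at hw
    have hkhi : κ ≤ (1+3*δ)*p*n := by nlinarith [hw.2]
    have ha : Real.log p - Real.log ((1+2*δ)*p) = -Real.log (1+2*δ) := by
      rw [Real.log_mul (by linarith) (by linarith)]
      ring
    have hfr0 : (0:ℝ) ≤ 2*δ*p/(1-p) := by positivity
    have hfr1 : 2*δ*p/(1-p) ≤ 2/3 := by
      rw [div_le_iff₀ hq]
      nlinarith
    have hb : Real.log (1-p) - Real.log (1-(1+2*δ)*p)
        = -Real.log (1-2*δ*p/(1-p)) := by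
      have h2 : 1-(1+2*δ)*p = (1-p)*(1-2*δ*p/(1-p)) := by field_simp; ring
      rw [h2, Real.log_mul (ne_of_gt (by linarith)) (ne_of_gt (by linarith))]
      ring
    rw [ha, hb]
    obtain ⟨a, hadef⟩ : ∃ a : ℝ, a = -Real.log (1+2*δ) := ⟨_, rfl⟩
    obtain ⟨b, hbdef⟩ : ∃ b : ℝ, b = -Real.log (1-2*δ*p/(1-p)) := ⟨_, rfl⟩
    rw [← hadef, ← hbdef]
    have ha0 : a ≤ 0 := by
      rw [hadef, neg_nonpos]
      apply Real.log_nonneg (by linarith)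
    have hb0 : 0 ≤ b := by
      rw [hbdef, neg_nonneg]
      exact Real.log_nonpos (by linarith) (by linarith)
    have hmono : ((1+3*δ)*p*n) * a + (n - (1+3*δ)*p*n) * b ≤ κ * a + (n - κ) * b := by
      nlinarith [mul_nonneg (sub_nonneg.2 hkhi) (by linarith : 0 ≤ b - a)]
    have hlog3 : Real.log (1/(1/3 : ℝ)) ≤ 111/100 := by
      norm_num
      linarith [log3_le]
    have hA : -(2*δ-2*δ^2+(8/3)*δ^3) ≤ a := by
      have := log_taylor_ub (x := 2*δ) (by linarith)
      rw [hadef]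
      nlinarith [this]
    have hBb : (2*δ*p/(1-p)) + (2*δ*p/(1-p))^2/2 ≤ b := by
      have := neg_log_taylor_lb (x := 2*δ*p/(1-p)) hfr0 (by linarith)
      rw [hbdef]
      linarith
    have hcore := coreU1 n p δ a b hp0 hp hδ0 hδ hn hnr hA hBb
    linarith [hcore, hmono, hlog3]

lemma polyU2 (p δ y : ℝ) (hp0 : 0 < p) (hp : p ≤ 1/2) (hδ0 : 0 < δ) (hδ : δ ≤ 1/2)
    (hy0 : 0 ≤ y) (hyub : y ≤ (3/2)*δ) (hyval : y * (1-p) = (3/2)*δ*p) :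
    -(25/3)*(δ^2*p) ≤ -((1+2*δ)*p*((3/2)*δ-(9/8)*δ^2+(9/8)*δ^3))
      + (1-(1+2*δ)*p)*(y + y^2/2) := by
  have esub : (1-(1+2*δ)*p)*(y + y^2/2) = (3/2)*δ*p - (5/4)*δ*p*y - δ*p*y^2 := by
    linear_combination (1 + y/2) * hyval
  rw [esub]
  have hdp : (0:ℝ) ≤ δ*p := by positivity
  have t1 : (5/4)*δ*p*y ≤ (15/8)*δ^2*p := by nlinarith [mul_le_mul_of_nonneg_left hyub hdp]
  have hy2 : y^2 ≤ (9/4)*δ^2 := by nlinarith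
  have t2 : δ*p*y^2 ≤ (9/4)*δ^3*p := by
    nlinarith [mul_le_mul_of_nonneg_left hy2 (by positivity : (0:ℝ) ≤ δ*p)]
  have hd3 : δ^3 ≤ (1/2)*δ^2 := by nlinarith
  have hd4 : δ^4 ≤ (1/2)*δ^3 := by nlinarith [sq_nonneg δ, mul_le_mul_of_nonneg_right hd3 hδ0.le]
  have t3 : (9/4)*δ^4*p ≤ (9/8)*δ^3*p := by nlinarith [mul_le_mul_of_nonneg_right hd4 hp0.le]
  have t4 : (27/8)*δ^3*p ≤ (27/16)*δ^2*p := by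
    nlinarith [mul_le_mul_of_nonneg_right hd3 hp0.le]
  nlinarith

lemma coreU2 (n : ℕ) (p δ a b : ℝ) (hp0 : 0 < p) (hp : p ≤ 1/2) (hδ0 : 0 < δ) (hδ : δ ≤ 1/2)
    (hn : 3 ≤ δ^2*p*n) (hnr : 0 < (n:ℝ))
    (hA : -((3/2)*δ-(9/8)*δ^2+(9/8)*δ^3) ≤ a)
    (hBb : ((3/2)*δ*p/(1-p)) + ((3/2)*δ*p/(1-p))^2/2 ≤ b) :
    -9*(δ^2*p)*n + 2 ≤ ((1+2*δ)*p*n) * a + (n - (1+2*δ)*p*n) * b := by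
  have hq : (0:ℝ) < 1 - p := by linarith
  obtain ⟨y, hydef⟩ : ∃ y : ℝ, y = (3/2)*δ*p/(1-p) := ⟨_, rfl⟩
  rw [← hydef] at hBb
  have hyval : y * (1-p) = (3/2)*δ*p := by
    rw [hydef]; field_simp
  have hy0 : 0 ≤ y := by rw [hydef]; positivity
  have hyub : y ≤ (3/2)*δ := by
    rw [hydef, div_le_iff₀ hq]
    nlinarith
  have hpoly := polyU2 p δ y hp0 hp hδ0 hδ hy0 hyub hyval
  have hth : (1+2*δ)*p ≤ 1 := by nlinarith
  have hcoef : 0 ≤ (n:ℝ) - (1+2*δ)*p*n := by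
    nlinarith [mul_nonneg (by linarith : (0:ℝ) ≤ 1 - (1+2*δ)*p) hnr.le]
  have hstep1 : ((1+2*δ)*p*n) * (-((3/2)*δ-(9/8)*δ^2+(9/8)*δ^3)) ≤ ((1+2*δ)*p*n) * a :=
    mul_le_mul_of_nonneg_left hA (by positivity)
  have hstep2 : ((n:ℝ) - (1+2*δ)*p*n) * (y + y^2/2) ≤ ((n:ℝ) - (1+2*δ)*p*n) * b :=
    mul_le_mul_of_nonneg_left hBb hcoef
  have hhalf : (2:ℝ) ≤ (2/3)*(δ^2*p)*n := by nlinarith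
  have hpolyn := mul_le_mul_of_nonneg_right hpoly hnr.le
  nlinarith [hstep1, hstep2, hpolyn, hhalf]

lemma caseU2 (n : ℕ) (p δ : ℝ) (hp0 : 0 < p) (hp : p ≤ 1/2) (hδ0 : 0 < δ) (hδ : δ ≤ 1/2)
    (hcase : 2/5 < p)
    (hn : 3 ≤ δ^2*p*n) (hn0 : 0 < n) :
    Real.exp (-9*(δ^2*p)*n) ≤ ∑ x ∈ Finset.univ.filter
      (· ∈ {x : Fin n → Bool | cnt n x ≥ (1+δ)*p*n}), wt n p x := by
  have hq : (0:ℝ) < 1 - p := by linarith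
  have hnr : (0:ℝ) < n := by
    have : (0:ℝ) < δ^2*p := by positivity
    nlinarith
  apply tilt n p ((1+(3/2)*δ)*p) (δ*p/2) (1/6) (δ^2*p) hp0 (by linarith)
    (by positivity) (by nlinarith) (by positivity) hn0 (by norm_num) (by norm_num)
  · intro x hx
    rw [abs_le] at hx
    simp only [Set.mem_setOf_eq]
    nlinarith [hx.1]
  · rw [div_le_iff₀ (by positivity)]
    have e1 : (1+(3/2)*δ)*p*(1-(1+(3/2)*δ)*p) ≤ 1/4 := by
      nlinarith [sq_nonneg (2*((1+(3/2)*δ)*p) - 1)]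
    nlinarith
  · intro κ hκ0 hκn hw
    rw [abs_le] at hw
    have hkhi : κ ≤ (1+2*δ)*p*n := by nlinarith [hw.2]
    have ha : Real.log p - Real.log ((1+(3/2)*δ)*p) = -Real.log (1+(3/2)*δ) := by
      rw [Real.log_mul (by linarith) (by linarith)]
      ring
    have hfr0 : (0:ℝ) ≤ (3/2)*δ*p/(1-p) := by positivity
    have hylt : (3/2)*δ*p/(1-p) ≤ 3/4 := by
      rw [div_le_iff₀ hq]
      nlinarith
    have hb : Real.log (1-p) - Real.log (1-(1+(3/2)*δ)*p)
        = -Real.log (1-(3/2)*δ*p/(1-p)) := by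
      have h2 : 1-(1+(3/2)*δ)*p = (1-p)*(1-(3/2)*δ*p/(1-p)) := by field_simp; ring
      rw [h2, Real.log_mul (ne_of_gt (by linarith)) (ne_of_gt (by linarith))]
      ring
    rw [ha, hb]
    obtain ⟨a, hadef⟩ : ∃ a : ℝ, a = -Real.log (1+(3/2)*δ) := ⟨_, rfl⟩
    obtain ⟨b, hbdef⟩ : ∃ b : ℝ, b = -Real.log (1-(3/2)*δ*p/(1-p)) := ⟨_, rfl⟩
    rw [← hadef, ← hbdef]
    have ha0 : a ≤ 0 := by
      rw [hadef, neg_nonpos]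
      apply Real.log_nonneg (by linarith)
    have hb0 : 0 ≤ b := by
      rw [hbdef, neg_nonneg]
      exact Real.log_nonpos (by linarith) (by linarith)
    have hmono : ((1+2*δ)*p*n) * a + (n - (1+2*δ)*p*n) * b ≤ κ * a + (n - κ) * b := by
      nlinarith [mul_nonneg (sub_nonneg.2 hkhi) (by linarith : 0 ≤ b - a)]
    have hlog6 : Real.log (1/(1/6 : ℝ)) ≤ 2 := by
      norm_num
      exact log6_le
    have hA : -((3/2)*δ-(9/8)*δ^2+(9/8)*δ^3) ≤ a := by
      have := log_taylor_ub (x := (3/2)*δ) (by linarith)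
      rw [hadef]
      nlinarith [this]
    have hBb : ((3/2)*δ*p/(1-p)) + ((3/2)*δ*p/(1-p))^2/2 ≤ b := by
      have := neg_log_taylor_lb (x := (3/2)*δ*p/(1-p)) hfr0 (by linarith)
      rw [hbdef]
      linarith
    have hcore := coreU2 n p δ a b hp0 hp hδ0 hδ hn hnr hA hBb
    linarith [hcore, hmono, hlog6]


open MeasureTheory in
theorem stmt_16 (p δ : ℝ) (hp0 : 0 < p) (hp : p ≤ 1/2) (hδ0 : 0 < δ) (hδ : δ ≤ 1/2)
    (n : ℕ) (hn : (n : ℝ) ≥ 3 / (δ^2 * p)) :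
    let ber : Measure Bool :=
      ENNReal.ofReal p • Measure.dirac true + ENNReal.ofReal (1 - p) • Measure.dirac false
    let μ := Measure.pi fun _ : Fin n => ber
    ((μ {x | (∑ i, if x i then (1:ℝ) else 0) ≤ (1 - δ) * p * n}).toReal
        ≥ Real.exp (-9 * δ^2 * p * n)) ∧
    ((μ {x | (∑ i, if x i then (1:ℝ) else 0) ≥ (1 + δ) * p * n}).toReal
        ≥ Real.exp (-9 * δ^2 * p * n)) := by
  intro ber μ
  have hδp : (0:ℝ) < δ^2*p := by positivity
  have hnr : (0:ℝ) < n := lt_of_lt_of_le (by positivity) hn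
  have hn0 : 0 < n := by exact_mod_cast hnr
  have hn3 : 3 ≤ δ^2*p*n := by
    rw [ge_iff_le, div_le_iff₀ hδp] at hn
    nlinarith [hn]
  have hexp : -9 * δ^2 * p * (n:ℝ) = -9*(δ^2*p)*n := by ring
  constructor
  · have heq : (μ {x | (∑ i, if x i then (1:ℝ) else 0) ≤ (1 - δ) * p * n}).toReal
        = ∑ x ∈ Finset.univ.filter
          (· ∈ {x : Fin n → Bool | cnt n x ≤ (1-δ)*p*n}), wt n p x :=
      meas_eq n p hp0.le (by linarith) {x : Fin n → Bool | cnt n x ≤ (1-δ)*p*n}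
    rw [ge_iff_le, heq, hexp]
    by_cases hc : δ ≤ 1/4 ∧ p ≤ 2/5
    · exact caseL1 n p δ hp0 hc.2 hδ0 hc.1 hn3 hn0
    · refine caseL2 n p δ hp0 hp hδ0 hδ ?_ hn3 hn0
      rcases not_and_or.1 hc with h | h
      · exact Or.inl (lt_of_not_ge h)
      · exact Or.inr (lt_of_not_ge h)
  · have heq : (μ {x | (∑ i, if x i then (1:ℝ) else 0) ≥ (1 + δ) * p * n}).toReal
        = ∑ x ∈ Finset.univ.filter
          (· ∈ {x : Fin n → Bool | cnt n x ≥ (1+δ)*p*n}), wt n p x :=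
      meas_eq n p hp0.le (by linarith) {x : Fin n → Bool | cnt n x ≥ (1+δ)*p*n}
    rw [ge_iff_le, heq, hexp]
    by_cases hc : p ≤ 2/5
    · exact caseU1 n p δ hp0 hc hδ0 hδ hn3 hn0
    · exact caseU2 n p δ hp0 hp hδ0 hδ (lt_of_not_ge hc) hn3 hn0
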